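/- There is a bijection between the set of permutations of [n] avoiding {1342, 1432} and the set of permutations of [n] avoiding {1234, 1243} that preserves both the values and the positions of the left-to-right minima. -/

import Mathlib

/-- `π` contains the pattern `p` (given as the sequence of its values). -/
def ContainsPat {n k : ℕ} (π : Equiv.Perm (Fin n)) (p : Fin k → ℕ) : Prop :=
  ∃ f : Fin k → Fin n, StrictMono f ∧ ∀ a b : Fin k, p a < p b ↔ π (f a) < π (f b)

/-- Position `j` is a left-to-right minimum of `π`. -/
def IsLRMin {n : ℕ} (π : Equiv.Perm (Fin n)) (j : Fin n) : Prop :=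
  ∀ i : Fin n, i < j → π j < π i

open Classical in
noncomputable def MinData {n : ℕ} (π : Equiv.Perm (Fin n)) : Fin n → Option (Fin n) :=
  fun j => if IsLRMin π j then some (π j) else none

lemma minData_spec {n : ℕ} {π π' : Equiv.Perm (Fin n)} (h : MinData π = MinData π')
    (j : Fin n) : (IsLRMin π j ↔ IsLRMin π' j) ∧ (IsLRMin π j → π j = π' j) := by
  have hj := congrFun h j
  unfold MinData at hj
  by_cases h1 : IsLRMin π j <;> by_cases h2 : IsLRMin π' j <;>
    simp [h1, h2] at hj ⊢ <;> first | exact hj | exact h2 | skip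

lemma assemble {X Y Z : Type*} [Finite X] [Finite Y] (f : X → Z) (g : Y → Z)
    (h : ∀ z, Nat.card {x : X // f x = z} = Nat.card {y : Y // g y = z}) :
    ∃ e : X ≃ Y, ∀ x, g (e x) = f x := by
  have E : ∀ z, Nonempty ({x : X // f x = z} ≃ {y : Y // g y = z}) :=
    fun z => Finite.card_eq.mp (h z)
  refine ⟨(Equiv.sigmaFiberEquiv f).symm.trans
    ((Equiv.sigmaCongrRight fun z => Classical.choice (E z)).trans (Equiv.sigmaFiberEquiv g)),
    fun x => ?_⟩
  exact ((Classical.choice (E (f x))) ⟨x, rfl⟩).2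



namespace Stmt8

variable {m : ℕ}

def CondW (a : Fin m → ℕ) (σ : Equiv.Perm (Fin m)) : Prop := ∀ i, a i ≤ (σ i : ℕ)

def CondA (a : Fin m → ℕ) (σ : Equiv.Perm (Fin m)) : Prop :=
  ∀ i j k : Fin m, i < j → i < k → j ≠ k → a i ≤ (σ j : ℕ) → σ j < σ i →
    a i ≤ (σ k : ℕ) → σ k < σ i → False

def CondB (σ : Equiv.Perm (Fin m)) : Prop :=
  ∀ i j k : Fin m, i < j → i < k → j ≠ k → σ i < σ j → σ i < σ k → False

noncomputable def reduce (σ : Equiv.Perm (Fin (m + 1))) : Equiv.Perm (Fin m) :=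
  Equiv.removeNone ((finSuccEquiv m).symm.trans (σ.trans (finSuccEquiv' (σ 0))))

lemma reduce_spec (σ : Equiv.Perm (Fin (m + 1))) (i : Fin m) :
    (σ 0).succAbove (reduce σ i) = σ i.succ := by
  set e := (finSuccEquiv m).symm.trans (σ.trans (finSuccEquiv' (σ 0))) with he
  have hne : σ i.succ ≠ σ 0 := fun h => (Fin.succ_ne_zero i) (σ.injective h)
  obtain ⟨j, hj⟩ := Fin.exists_succAbove_eq hne
  have h2 : e (some i) = some j := by
    simp only [he, Equiv.trans_apply, finSuccEquiv_symm_some, ← hj, finSuccEquiv'_succAbove]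
  have h3 := Equiv.removeNone_some e ⟨j, h2⟩
  rw [h2] at h3
  have h4 : reduce σ i = j := Option.some_injective _ h3
  rw [h4, hj]

def build (c : Fin (m + 1)) (τ : Equiv.Perm (Fin m)) : Equiv.Perm (Fin (m + 1)) :=
  (finSuccEquiv m).trans ((Equiv.optionCongr τ).trans (finSuccEquiv' c).symm)

lemma build_zero (c : Fin (m + 1)) (τ : Equiv.Perm (Fin m)) : build c τ 0 = c := by
  simp [build, finSuccEquiv_zero, finSuccEquiv'_symm_none]

lemma build_succ (c : Fin (m + 1)) (τ : Equiv.Perm (Fin m)) (i : Fin m) :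
    build c τ i.succ = c.succAbove (τ i) := by
  simp [build, finSuccEquiv_succ, finSuccEquiv'_symm_some]

noncomputable def D : Equiv.Perm (Fin (m + 1)) ≃ Fin (m + 1) × Equiv.Perm (Fin m) where
  toFun σ := (σ 0, reduce σ)
  invFun p := build p.1 p.2
  left_inv σ := Equiv.ext fun i => by
    induction i using Fin.cases with
    | zero => exact build_zero _ _
    | succ i => rw [build_succ, reduce_spec]
  right_inv p := by
    obtain ⟨c, τ⟩ := p
    have h0 : build c τ 0 = c := build_zero c τ
    refine Prod.ext h0 (Equiv.ext fun i => ?_)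
    apply Fin.succAbove_right_injective (p := c)
    have h1 := reduce_spec (build c τ) i
    rw [h0] at h1
    show c.succAbove (reduce (build c τ) i) = c.succAbove (τ i)
    rw [h1, build_succ]

lemma le_succAbove_iff {b : ℕ} {c : Fin (m + 1)} {x : Fin m} (h : b ≤ (c : ℕ)) :
    b ≤ ((c.succAbove x : Fin (m + 1)) : ℕ) ↔ b ≤ (x : ℕ) := by
  rcases lt_or_ge (Fin.castSucc x) c with hx | hx
  · rw [Fin.succAbove_of_castSucc_lt _ _ hx]; simp
  · rw [Fin.succAbove_of_le_castSucc _ _ hx]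
    have hcx : (c : ℕ) ≤ (x : ℕ) := by
      rw [Fin.le_def] at hx; simpa using hx
    simp only [Fin.val_succ]
    omega

lemma step_iffA (a : Fin (m + 1) → ℕ) (ha : Antitone a) (σ : Equiv.Perm (Fin (m + 1))) :
    (CondW a σ ∧ CondA a σ) ↔
      ((a 0 ≤ ((σ 0 : Fin (m + 1)) : ℕ) ∧ ((σ 0 : Fin (m + 1)) : ℕ) ≤ a 0 + 1) ∧
        (CondW (a ∘ Fin.succ) (reduce σ) ∧ CondA (a ∘ Fin.succ) (reduce σ))) := by
  have hs : ∀ i, (σ 0).succAbove (reduce σ i) = σ i.succ := reduce_spec σ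
  have hf2 : ∀ x y : Fin m, (σ 0).succAbove x < (σ 0).succAbove y ↔ x < y :=
    fun x y => Fin.succAbove_lt_succAbove_iff
  constructor
  · rintro ⟨hW, hA⟩
    have h0 : a 0 ≤ ((σ 0 : Fin (m + 1)) : ℕ) := hW 0
    have hpre : ∀ i : Fin m, a i.succ ≤ ((σ 0 : Fin (m + 1)) : ℕ) :=
      fun i => le_trans (ha (Fin.zero_le _)) h0
    refine ⟨⟨h0, ?_⟩, ?_, ?_⟩
    · -- σ 0 ≤ a 0 + 1
      by_contra hcon
      push_neg at hcon
      have hcm : ((σ 0 : Fin (m + 1)) : ℕ) < m + 1 := (σ 0).isLt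
      have hb1 : a 0 < m + 1 := by omega
      have hb2 : a 0 + 1 < m + 1 := by omega
      set v1 : Fin (m + 1) := ⟨a 0, hb1⟩ with hv1
      set v2 : Fin (m + 1) := ⟨a 0 + 1, hb2⟩ with hv2
      have hv1c : v1 < σ 0 := by rw [Fin.lt_def]; show a 0 < _; omega
      have hv2c : v2 < σ 0 := by rw [Fin.lt_def]; show a 0 + 1 < _; omega
      have hσj : σ (σ.symm v1) = v1 := σ.apply_symm_apply v1
      have hσk : σ (σ.symm v2) = v2 := σ.apply_symm_apply v2
      have hj0 : (0 : Fin (m + 1)) < σ.symm v1 := by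
        rw [Fin.pos_iff_ne_zero]
        intro h
        rw [h] at hσj
        exact absurd hσj.symm (ne_of_lt hv1c)
      have hk0 : (0 : Fin (m + 1)) < σ.symm v2 := by
        rw [Fin.pos_iff_ne_zero]
        intro h
        rw [h] at hσk
        exact absurd hσk.symm (ne_of_lt hv2c)
      have hjk : σ.symm v1 ≠ σ.symm v2 := by
        intro h
        have : v1 = v2 := by rw [← hσj, ← hσk, h]
        simp [hv1, hv2, Fin.ext_iff] at this
      exact hA 0 (σ.symm v1) (σ.symm v2) hj0 hk0 hjk
        (by rw [hσj]) (by rw [hσj]; exact hv1c)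
        (by rw [hσk]; show a 0 ≤ a 0 + 1; omega) (by rw [hσk]; exact hv2c)
    · -- CondW reduced
      intro i
      have := hW i.succ
      rw [← hs i] at this
      exact (le_succAbove_iff (hpre i)).mp this
    · -- CondA reduced
      intro i j k hij hik hjk hw1 hl1 hw2 hl2
      refine hA i.succ j.succ k.succ (Fin.succ_lt_succ_iff.mpr hij)
        (Fin.succ_lt_succ_iff.mpr hik)
        (fun h => hjk (Fin.succ_injective _ h)) ?_ ?_ ?_ ?_
      · rw [← hs j]; exact (le_succAbove_iff (hpre i)).mpr hw1
      · rw [← hs j, ← hs i]; exact (hf2 _ _).mpr hl1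
      · rw [← hs k]; exact (le_succAbove_iff (hpre i)).mpr hw2
      · rw [← hs k, ← hs i]; exact (hf2 _ _).mpr hl2
  · rintro ⟨⟨h0, h1⟩, hW', hA'⟩
    have hpre : ∀ i : Fin m, a i.succ ≤ ((σ 0 : Fin (m + 1)) : ℕ) :=
      fun i => le_trans (ha (Fin.zero_le _)) h0
    constructor
    · -- CondW
      intro i
      induction i using Fin.cases with
      | zero => exact h0
      | succ i =>
        rw [← hs i]
        exact (le_succAbove_iff (hpre i)).mpr (hW' i)
    · -- CondA
      intro i j k hij hik hjk hw1 hl1 hw2 hl2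
      induction i using Fin.cases with
      | zero =>
        apply hjk
        apply σ.injective
        have e1 : (σ j : ℕ) = a 0 := by
          have := Fin.lt_def.mp hl1; omega
        have e2 : (σ k : ℕ) = a 0 := by
          have := Fin.lt_def.mp hl2; omega
        exact Fin.ext (e1.trans e2.symm)
      | succ i =>
        induction j using Fin.cases with
        | zero => exact (Fin.not_lt.mpr (Fin.zero_le _)) hij
        | succ j =>
          induction k using Fin.cases with
          | zero => exact (Fin.not_lt.mpr (Fin.zero_le _)) hik
          | succ k =>
            refine hA' i j k (Fin.succ_lt_succ_iff.mp hij) (Fin.succ_lt_succ_iff.mp hik)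
              (fun h => hjk (by rw [h])) ?_ ?_ ?_ ?_
            · rw [← hs j] at hw1; exact (le_succAbove_iff (hpre i)).mp hw1
            · rw [← hs j, ← hs i] at hl1; exact (hf2 _ _).mp hl1
            · rw [← hs k] at hw2; exact (le_succAbove_iff (hpre i)).mp hw2
            · rw [← hs k, ← hs i] at hl2; exact (hf2 _ _).mp hl2

lemma step_iffB (a : Fin (m + 1) → ℕ) (ha' : ∀ i : Fin m, a i.succ ≤ a 0)
    (σ : Equiv.Perm (Fin (m + 1))) :
    (CondW a σ ∧ CondB σ) ↔
      ((a 0 ≤ ((σ 0 : Fin (m + 1)) : ℕ) ∧ m ≤ ((σ 0 : Fin (m + 1)) : ℕ) + 1) ∧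
        (CondW (a ∘ Fin.succ) (reduce σ) ∧ CondB (reduce σ))) := by
  have hs : ∀ i, (σ 0).succAbove (reduce σ i) = σ i.succ := reduce_spec σ
  have hf2 : ∀ x y : Fin m, (σ 0).succAbove x < (σ 0).succAbove y ↔ x < y :=
    fun x y => Fin.succAbove_lt_succAbove_iff
  constructor
  · rintro ⟨hW, hB⟩
    have h0 : a 0 ≤ ((σ 0 : Fin (m + 1)) : ℕ) := hW 0
    have hpre : ∀ i : Fin m, a i.succ ≤ ((σ 0 : Fin (m + 1)) : ℕ) :=
      fun i => le_trans (ha' i) h0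
    refine ⟨⟨h0, ?_⟩, ?_, ?_⟩
    · -- m ≤ σ 0 + 1
      by_contra hcon
      push_neg at hcon
      have hcm : ((σ 0 : Fin (m + 1)) : ℕ) < m + 1 := (σ 0).isLt
      have hb1 : m - 1 < m + 1 := by omega
      have hb2 : m < m + 1 := by omega
      set v1 : Fin (m + 1) := ⟨m - 1, hb1⟩ with hv1
      set v2 : Fin (m + 1) := ⟨m, hb2⟩ with hv2
      have hv1c : σ 0 < v1 := by rw [Fin.lt_def]; show _ < m - 1; omega
      have hv2c : σ 0 < v2 := by rw [Fin.lt_def]; show _ < m; omega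
      have hσj : σ (σ.symm v1) = v1 := σ.apply_symm_apply v1
      have hσk : σ (σ.symm v2) = v2 := σ.apply_symm_apply v2
      have hj0 : (0 : Fin (m + 1)) < σ.symm v1 := by
        rw [Fin.pos_iff_ne_zero]
        intro h
        rw [h] at hσj
        exact absurd hσj (ne_of_lt hv1c)
      have hk0 : (0 : Fin (m + 1)) < σ.symm v2 := by
        rw [Fin.pos_iff_ne_zero]
        intro h
        rw [h] at hσk
        exact absurd hσk (ne_of_lt hv2c)
      have hjk : σ.symm v1 ≠ σ.symm v2 := by
        intro h
        have h5 : v1 = v2 := by rw [← hσj, ← hσk, h]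
        rw [hv1, hv2, Fin.ext_iff] at h5
        simp at h5
        omega
      exact hB 0 (σ.symm v1) (σ.symm v2) hj0 hk0 hjk
        (by rw [hσj]; exact hv1c) (by rw [hσk]; exact hv2c)
    · -- CondW reduced
      intro i
      have := hW i.succ
      rw [← hs i] at this
      exact (le_succAbove_iff (hpre i)).mp this
    · -- CondB reduced
      intro i j k hij hik hjk hl1 hl2
      refine hB i.succ j.succ k.succ (Fin.succ_lt_succ_iff.mpr hij)
        (Fin.succ_lt_succ_iff.mpr hik)
        (fun h => hjk (Fin.succ_injective _ h)) ?_ ?_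
      · rw [← hs j, ← hs i]; exact (hf2 _ _).mpr hl1
      · rw [← hs k, ← hs i]; exact (hf2 _ _).mpr hl2
  · rintro ⟨⟨h0, h1⟩, hW', hB'⟩
    have hpre : ∀ i : Fin m, a i.succ ≤ ((σ 0 : Fin (m + 1)) : ℕ) :=
      fun i => le_trans (ha' i) h0
    constructor
    · intro i
      induction i using Fin.cases with
      | zero => exact h0
      | succ i =>
        rw [← hs i]
        exact (le_succAbove_iff (hpre i)).mpr (hW' i)
    · intro i j k hij hik hjk hl1 hl2
      induction i using Fin.cases with
      | zero =>
        apply hjk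
        apply σ.injective
        have b1 : (σ j : ℕ) < m + 1 := (σ j).isLt
        have b2 : (σ k : ℕ) < m + 1 := (σ k).isLt
        have e1 := Fin.lt_def.mp hl1
        have e2 := Fin.lt_def.mp hl2
        exact Fin.ext (by omega)
      | succ i =>
        induction j using Fin.cases with
        | zero => exact (Fin.not_lt.mpr (Fin.zero_le _)) hij
        | succ j =>
          induction k using Fin.cases with
          | zero => exact (Fin.not_lt.mpr (Fin.zero_le _)) hik
          | succ k =>
            refine hB' i j k (Fin.succ_lt_succ_iff.mp hij) (Fin.succ_lt_succ_iff.mp hik)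
              (fun h => hjk (by rw [h])) ?_ ?_
            · rw [← hs j, ← hs i] at hl1; exact (hf2 _ _).mp hl1
            · rw [← hs k, ← hs i] at hl2; exact (hf2 _ _).mp hl2

lemma card_c (m a0 : ℕ) :
    Nat.card {c : Fin (m + 1) // a0 ≤ (c : ℕ) ∧ (c : ℕ) ≤ a0 + 1}
    = Nat.card {c : Fin (m + 1) // a0 ≤ (c : ℕ) ∧ m ≤ (c : ℕ) + 1} := by
  apply Nat.card_congr
  refine ⟨fun c => ⟨⟨m - ((c.1 : ℕ) - a0), by omega⟩, ?_, ?_⟩,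
          fun c => ⟨⟨m - ((c.1 : ℕ) - a0), by omega⟩, ?_, ?_⟩, ?_, ?_⟩
  · have h1 := c.2.1; have h2 := c.2.2; have h3 := c.1.isLt; show a0 ≤ m - _; omega
  · have h1 := c.2.1; have h2 := c.2.2; have h3 := c.1.isLt; show m ≤ m - _ + 1; omega
  · have h1 := c.2.1; have h2 := c.2.2; have h3 := c.1.isLt; show a0 ≤ m - _; omega
  · have h1 := c.2.1; have h2 := c.2.2; have h3 := c.1.isLt; show m - _ ≤ a0 + 1; omega
  · intro c
    have h1 := c.2.1; have h2 := c.2.2; have h3 := c.1.isLt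
    apply Subtype.ext; apply Fin.ext
    show m - ((m - ((c.1 : ℕ) - a0)) - a0) = (c.1 : ℕ)
    omega
  · intro c
    have h1 := c.2.1; have h2 := c.2.2; have h3 := c.1.isLt
    apply Subtype.ext; apply Fin.ext
    show m - ((m - ((c.1 : ℕ) - a0)) - a0) = (c.1 : ℕ)
    omega

lemma card_stepA (a : Fin (m + 1) → ℕ) (ha : Antitone a) :
    Nat.card {σ : Equiv.Perm (Fin (m + 1)) // CondW a σ ∧ CondA a σ}
    = Nat.card {c : Fin (m + 1) // a 0 ≤ (c : ℕ) ∧ (c : ℕ) ≤ a 0 + 1} *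
      Nat.card {τ : Equiv.Perm (Fin m) // CondW (a ∘ Fin.succ) τ ∧ CondA (a ∘ Fin.succ) τ} := by
  rw [← Nat.card_prod]
  apply Nat.card_congr
  refine (Equiv.subtypeEquiv D ?_).trans (Equiv.subtypeProdEquivProd)
  intro σ
  exact step_iffA a ha σ

lemma card_stepB (a : Fin (m + 1) → ℕ) (ha' : ∀ i : Fin m, a i.succ ≤ a 0) :
    Nat.card {σ : Equiv.Perm (Fin (m + 1)) // CondW a σ ∧ CondB σ}
    = Nat.card {c : Fin (m + 1) // a 0 ≤ (c : ℕ) ∧ m ≤ (c : ℕ) + 1} *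
      Nat.card {τ : Equiv.Perm (Fin m) // CondW (a ∘ Fin.succ) τ ∧ CondB τ} := by
  rw [← Nat.card_prod]
  apply Nat.card_congr
  refine (Equiv.subtypeEquiv D ?_).trans (Equiv.subtypeProdEquivProd)
  intro σ
  exact step_iffB a ha' σ

lemma key_card : ∀ (m : ℕ) (a : Fin m → ℕ), Antitone a →
    Nat.card {σ : Equiv.Perm (Fin m) // CondW a σ ∧ CondA a σ}
    = Nat.card {σ : Equiv.Perm (Fin m) // CondW a σ ∧ CondB σ} := by
  intro m
  induction m with
  | zero =>
    intro a _
    apply Nat.card_congr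
    refine Equiv.subtypeEquiv (Equiv.refl _) fun σ => ?_
    exact iff_of_true ⟨fun i => i.elim0, fun i => i.elim0⟩ ⟨fun i => i.elim0, fun i => i.elim0⟩
  | succ m ih =>
    intro a ha
    have ha' : ∀ i : Fin m, a i.succ ≤ a 0 := fun i => ha (Fin.zero_le _)
    rw [card_stepA a ha, card_stepB a ha', card_c,
      ih (a ∘ Fin.succ) (ha.comp_monotone fun i j h => Fin.succ_le_succ_iff.mpr h)]

end Stmt8


namespace Stmt8

variable {n : ℕ}

lemma strictMono_vec4 {i j k l : Fin n} (h1 : i < j) (h2 : j < k) (h3 : k < l) :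
    StrictMono ![i, j, k, l] := by
  intro a b hab
  fin_cases a <;> fin_cases b <;>
    first
      | exact absurd hab (by decide)
      | simpa using h1
      | simpa using h2
      | simpa using h3
      | simpa using h1.trans h2
      | simpa using h2.trans h3
      | simpa using (h1.trans h2).trans h3

lemma containsA_iff (π : Equiv.Perm (Fin n)) :
    (ContainsPat π ![1, 3, 4, 2] ∨ ContainsPat π ![1, 4, 3, 2]) ↔
      ∃ i j k l : Fin n, i < j ∧ j < k ∧ k < l ∧ π i < π l ∧ π l < π j ∧ π l < π k := by
  constructor
  · rintro (⟨f, hf, h⟩ | ⟨f, hf, h⟩)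
    · exact ⟨f 0, f 1, f 2, f 3, hf (by decide), hf (by decide), hf (by decide),
        (h 0 3).mp (by decide), (h 3 1).mp (by decide), (h 3 2).mp (by decide)⟩
    · exact ⟨f 0, f 1, f 2, f 3, hf (by decide), hf (by decide), hf (by decide),
        (h 0 3).mp (by decide), (h 3 1).mp (by decide), (h 3 2).mp (by decide)⟩
  · rintro ⟨i, j, k, l, hij, hjk, hkl, h1, h2, h3⟩
    have hv1 := Fin.lt_def.mp h1
    have hv2 := Fin.lt_def.mp h2
    have hv3 := Fin.lt_def.mp h3
    rcases lt_trichotomy (π j) (π k) with hc | hc | hc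
    · left
      refine ⟨![i, j, k, l], strictMono_vec4 hij hjk hkl, fun a b => ?_⟩
      have hvc := Fin.lt_def.mp hc
      fin_cases a <;> fin_cases b <;>
        simp only [Fin.mk_zero, Fin.mk_one, Matrix.cons_val_zero, Matrix.cons_val_one,
          Matrix.head_cons, Matrix.cons_val_two, Matrix.tail_cons, Matrix.cons_val_three,
          Fin.lt_def, show ((⟨2, by omega⟩ : Fin 4) : Fin 4) = 2 from rfl,
          show ((⟨3, by omega⟩ : Fin 4) : Fin 4) = 3 from rfl] <;> omega
    · exact absurd (π.injective hc) (ne_of_lt hjk)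
    · right
      refine ⟨![i, j, k, l], strictMono_vec4 hij hjk hkl, fun a b => ?_⟩
      have hvc := Fin.lt_def.mp hc
      fin_cases a <;> fin_cases b <;>
        simp only [Fin.mk_zero, Fin.mk_one, Matrix.cons_val_zero, Matrix.cons_val_one,
          Matrix.head_cons, Matrix.cons_val_two, Matrix.tail_cons, Matrix.cons_val_three,
          Fin.lt_def, show ((⟨2, by omega⟩ : Fin 4) : Fin 4) = 2 from rfl,
          show ((⟨3, by omega⟩ : Fin 4) : Fin 4) = 3 from rfl] <;> omega

lemma containsB_iff (π : Equiv.Perm (Fin n)) :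
    (ContainsPat π ![1, 2, 3, 4] ∨ ContainsPat π ![1, 2, 4, 3]) ↔
      ∃ i j k l : Fin n, i < j ∧ j < k ∧ k < l ∧ π i < π j ∧ π j < π k ∧ π j < π l := by
  constructor
  · rintro (⟨f, hf, h⟩ | ⟨f, hf, h⟩)
    · exact ⟨f 0, f 1, f 2, f 3, hf (by decide), hf (by decide), hf (by decide),
        (h 0 1).mp (by decide), (h 1 2).mp (by decide), (h 1 3).mp (by decide)⟩
    · exact ⟨f 0, f 1, f 2, f 3, hf (by decide), hf (by decide), hf (by decide),
        (h 0 1).mp (by decide), (h 1 2).mp (by decide), (h 1 3).mp (by decide)⟩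
  · rintro ⟨i, j, k, l, hij, hjk, hkl, h1, h2, h3⟩
    have hv1 := Fin.lt_def.mp h1
    have hv2 := Fin.lt_def.mp h2
    have hv3 := Fin.lt_def.mp h3
    rcases lt_trichotomy (π k) (π l) with hc | hc | hc
    · left
      refine ⟨![i, j, k, l], strictMono_vec4 hij hjk hkl, fun a b => ?_⟩
      have hvc := Fin.lt_def.mp hc
      fin_cases a <;> fin_cases b <;>
        simp only [Fin.mk_zero, Fin.mk_one, Matrix.cons_val_zero, Matrix.cons_val_one,
          Matrix.head_cons, Matrix.cons_val_two, Matrix.tail_cons, Matrix.cons_val_three,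
          Fin.lt_def, show ((⟨2, by omega⟩ : Fin 4) : Fin 4) = 2 from rfl,
          show ((⟨3, by omega⟩ : Fin 4) : Fin 4) = 3 from rfl] <;> omega
    · exact absurd (π.injective hc) (ne_of_lt hkl)
    · right
      refine ⟨![i, j, k, l], strictMono_vec4 hij hjk hkl, fun a b => ?_⟩
      have hvc := Fin.lt_def.mp hc
      fin_cases a <;> fin_cases b <;>
        simp only [Fin.mk_zero, Fin.mk_one, Matrix.cons_val_zero, Matrix.cons_val_one,
          Matrix.head_cons, Matrix.cons_val_two, Matrix.tail_cons, Matrix.cons_val_three,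
          Fin.lt_def, show ((⟨2, by omega⟩ : Fin 4) : Fin 4) = 2 from rfl,
          show ((⟨3, by omega⟩ : Fin 4) : Fin 4) = 3 from rfl] <;> omega

open Finset

section Reduction

variable {n : ℕ}

lemma card_filter_lt_orderIso {s : Finset (Fin n)} {k : ℕ} (e : Fin k ≃o {x // x ∈ s})
    (x : Fin k) :
    ((s.filter fun p => p < (e x : Fin n)).card : ℕ) = (x : ℕ) := by
  classical
  rw [← Fin.card_Iio (b := x)]
  refine Finset.card_bij' (fun p hp => e.symm ⟨p, (Finset.mem_filter.mp hp).1⟩)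
    (fun y _ => (e y : Fin n)) ?_ ?_ ?_ ?_
  · intro p hp
    rw [Finset.mem_Iio]
    have h2 := (Finset.mem_filter.mp hp).2
    have hlt : (⟨p, (Finset.mem_filter.mp hp).1⟩ : {x // x ∈ s}) < e x := by
      rw [Subtype.mk_lt_mk]; exact h2
    rw [← OrderIso.lt_iff_lt e, OrderIso.apply_symm_apply]
    exact hlt
  · intro y hy
    rw [Finset.mem_Iio] at hy
    rw [Finset.mem_filter]
    exact ⟨(e y).2, (OrderIso.lt_iff_lt e).mpr hy⟩
  · intro p hp; simp
  · intro y hy; simp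

lemma card_filter_le_orderIso {s : Finset (Fin n)} {k : ℕ} (e : Fin k ≃o {x // x ∈ s})
    (x : Fin k) :
    ((s.filter fun p => p ≤ (e x : Fin n)).card : ℕ) = (x : ℕ) + 1 := by
  classical
  rw [← Fin.card_Iic (b := x)]
  refine Finset.card_bij' (fun p hp => e.symm ⟨p, (Finset.mem_filter.mp hp).1⟩)
    (fun y _ => (e y : Fin n)) ?_ ?_ ?_ ?_
  · intro p hp
    rw [Finset.mem_Iic]
    have h2 := (Finset.mem_filter.mp hp).2
    have hle : (⟨p, (Finset.mem_filter.mp hp).1⟩ : {x // x ∈ s}) ≤ e x := by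
      rw [Subtype.mk_le_mk]; exact h2
    rw [← OrderIso.le_iff_le e, OrderIso.apply_symm_apply]
    exact hle
  · intro y hy
    rw [Finset.mem_Iic] at hy
    rw [Finset.mem_filter]
    exact ⟨(e y).2, (OrderIso.le_iff_le e).mpr hy⟩
  · intro p hp; simp
  · intro y hy; simp

open scoped Classical in
lemma lowerset_iff {s : Finset (Fin n)} {k : ℕ} (e : Fin k ≃o {x // x ∈ s}) (Q : Fin n → Prop)
    (mono : ∀ p q : Fin n, p ≤ q → Q p → Q q) (x : Fin k) :
    (((s.filter fun p => ¬ Q p).card : ℕ) ≤ (x : ℕ)) ↔ Q (e x) := by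
  classical
  constructor
  · intro h
    by_contra hq
    have hsub : s.filter (fun p => p ≤ (e x : Fin n)) ⊆ s.filter fun p => ¬ Q p := by
      intro p hp
      rw [Finset.mem_filter] at hp ⊢
      exact ⟨hp.1, fun hQ => hq (mono p _ hp.2 hQ)⟩
    have hc := Finset.card_le_card hsub
    rw [card_filter_le_orderIso e x] at hc
    omega
  · intro hq
    have hsub : (s.filter fun p => ¬ Q p) ⊆ s.filter fun p => p < (e x : Fin n) := by
      intro p hp
      rw [Finset.mem_filter] at hp ⊢
      refine ⟨hp.1, ?_⟩
      by_contra hlt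
      push_neg at hlt
      exact hp.2 (mono _ p hlt hq)
    have hc := Finset.card_le_card hsub
    rwa [card_filter_lt_orderIso e x] at hc

open scoped Classical in
noncomputable def Pset (π₀ : Equiv.Perm (Fin n)) : Finset (Fin n) :=
  Finset.univ.filter fun j => ¬ IsLRMin π₀ j

noncomputable def Uset (π₀ : Equiv.Perm (Fin n)) : Finset (Fin n) := (Pset π₀).image π₀

lemma mem_Pset {π₀ : Equiv.Perm (Fin n)} {p : Fin n} :
    p ∈ Pset π₀ ↔ ¬ IsLRMin π₀ p := by
  simp [Pset]

lemma mem_Uset {π₀ : Equiv.Perm (Fin n)} {v : Fin n} :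
    v ∈ Uset π₀ ↔ ∃ p ∈ Pset π₀, π₀ p = v := by
  simp [Uset]

lemma uset_card (π₀ : Equiv.Perm (Fin n)) : (Uset π₀).card = (Pset π₀).card :=
  Finset.card_image_of_injective _ π₀.injective

noncomputable def pE (π₀ : Equiv.Perm (Fin n)) :
    Fin (Pset π₀).card ≃o {x // x ∈ Pset π₀} := (Pset π₀).orderIsoOfFin rfl

noncomputable def uE (π₀ : Equiv.Perm (Fin n)) :
    Fin (Pset π₀).card ≃o {x // x ∈ Uset π₀} := (Uset π₀).orderIsoOfFin (uset_card π₀)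

def Allowed (π₀ : Equiv.Perm (Fin n)) (v p : Fin n) : Prop :=
  ∃ j, j < p ∧ IsLRMin π₀ j ∧ π₀ j < v

lemma allowed_mono_pos {π₀ : Equiv.Perm (Fin n)} {v : Fin n} :
    ∀ p q : Fin n, p ≤ q → Allowed π₀ v p → Allowed π₀ v q :=
  fun _ _ hpq ⟨j, hj, h1, h2⟩ => ⟨j, lt_of_lt_of_le hj hpq, h1, h2⟩

lemma allowed_mono_val {π₀ : Equiv.Perm (Fin n)} {v w p : Fin n} (hvw : v ≤ w) :
    Allowed π₀ v p → Allowed π₀ w p :=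
  fun ⟨j, hj, h1, h2⟩ => ⟨j, hj, h1, lt_of_lt_of_le h2 hvw⟩

open scoped Classical in
noncomputable def aF (π₀ : Equiv.Perm (Fin n)) : Fin (Pset π₀).card → ℕ :=
  fun i => ((Pset π₀).filter fun p => ¬ Allowed π₀ (uE π₀ i) p).card

lemma aF_iff {π₀ : Equiv.Perm (Fin n)} (i x : Fin (Pset π₀).card) :
    aF π₀ i ≤ (x : ℕ) ↔ Allowed π₀ (uE π₀ i) (pE π₀ x) := by
  classical
  exact lowerset_iff (pE π₀) _ allowed_mono_pos x

lemma aF_antitone (π₀ : Equiv.Perm (Fin n)) : Antitone (aF π₀) := by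
  classical
  intro i j hij
  apply Finset.card_le_card
  apply Finset.monotone_filter_right
  intro p _ hp hq
  apply hp
  refine allowed_mono_val ?_ hq
  exact_mod_cast (uE π₀).monotone hij

lemma exists_min_before {π : Equiv.Perm (Fin n)} {p : Fin n} (h : ¬ IsLRMin π p) :
    ∃ j, j < p ∧ IsLRMin π j ∧ π j < π p := by
  classical
  unfold IsLRMin at h
  push_neg at h
  obtain ⟨i0, hi0, hle⟩ := h
  have hne : (Finset.univ.filter fun i : Fin n => i < p).Nonempty :=
    ⟨i0, by simp [hi0]⟩
  obtain ⟨j, hjmem, hjmin⟩ := Finset.exists_min_image _ π hne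
  rw [Finset.mem_filter] at hjmem
  have hjp : j < p := hjmem.2
  refine ⟨j, hjp, ?_, ?_⟩
  · intro i hij
    have hip : i < p := hij.trans hjp
    have hle2 := hjmin i (by simp [hip])
    have hne2 : π j ≠ π i := fun hh => (ne_of_lt hij) (π.injective hh).symm
    exact lt_of_le_of_ne hle2 hne2
  · have ha := hjmin i0 (by simp [hi0])
    have hb : π j ≠ π p := fun hh => (ne_of_lt hjp) (π.injective hh)
    exact lt_of_le_of_ne (le_trans ha hle) hb

lemma fiber_iff (π₀ π : Equiv.Perm (Fin n)) :
    MinData π = MinData π₀ ↔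
      (∀ j, IsLRMin π j ↔ IsLRMin π₀ j) ∧ (∀ j, IsLRMin π₀ j → π j = π₀ j) := by
  constructor
  · intro h
    exact ⟨fun j => (minData_spec h j).1,
      fun j hj => (minData_spec h j).2 (((minData_spec h j).1).mpr hj)⟩
  · rintro ⟨h1, h2⟩
    funext j
    unfold MinData
    by_cases hj : IsLRMin π₀ j
    · rw [if_pos ((h1 j).mpr hj), if_pos hj, h2 j hj]
    · rw [if_neg (fun hc => hj ((h1 j).mp hc)), if_neg hj]

lemma fiber_bij {π₀ π : Equiv.Perm (Fin n)} (h : MinData π = MinData π₀) :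
    ∀ x, x ∈ Pset π₀ ↔ π x ∈ Uset π₀ := by
  obtain ⟨h1, h2⟩ := (fiber_iff π₀ π).mp h
  intro x
  rw [mem_Pset, mem_Uset]
  constructor
  · intro hx
    refine ⟨π₀.symm (π x), ?_, π₀.apply_symm_apply _⟩
    rw [mem_Pset]
    intro hmin
    have hv : π (π₀.symm (π x)) = π₀ (π₀.symm (π x)) := h2 _ hmin
    rw [π₀.apply_symm_apply] at hv
    have hxx : π₀.symm (π x) = x := π.injective hv
    rw [hxx] at hmin
    exact hx hmin
  · rintro ⟨p, hp, hpv⟩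
    rw [mem_Pset] at hp
    intro hx
    have hv : π x = π₀ x := h2 x hx
    rw [← hpv] at hv
    have hpx : p = x := π₀.injective hv
    rw [hpx] at hp
    exact hp hx

noncomputable def Tmap (π₀ π : Equiv.Perm (Fin n))
    (hb : ∀ x, x ∈ Pset π₀ ↔ π x ∈ Uset π₀) : Equiv.Perm (Fin (Pset π₀).card) :=
  ((uE π₀).toEquiv.trans (Equiv.subtypeEquiv (π : Fin n ≃ Fin n) hb).symm).trans
    (pE π₀).toEquiv.symm

lemma Tmap_spec (π₀ π : Equiv.Perm (Fin n)) (hb) (i : Fin (Pset π₀).card) :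
    π ((pE π₀ (Tmap π₀ π hb i) : Fin n)) = (uE π₀ i : Fin n) := by
  show π ((pE π₀ ((pE π₀).toEquiv.symm
    ((Equiv.subtypeEquiv (π : Fin n ≃ Fin n) hb).symm ((uE π₀).toEquiv i))) : Fin n)) = _
  rw [show ∀ y, pE π₀ ((pE π₀).toEquiv.symm y) = y from fun y => (pE π₀).apply_symm_apply y]
  exact congrArg Subtype.val
    ((Equiv.subtypeEquiv (π : Fin n ≃ Fin n) hb).apply_symm_apply ((uE π₀).toEquiv i))

lemma Tmap_spec2 (π₀ π : Equiv.Perm (Fin n)) (hb) (x : Fin (Pset π₀).card) :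
    π ((pE π₀ x : Fin n)) = (uE π₀ ((Tmap π₀ π hb).symm x) : Fin n) := by
  have := Tmap_spec π₀ π hb ((Tmap π₀ π hb).symm x)
  rwa [Equiv.apply_symm_apply] at this

lemma Tmap_window {π₀ π : Equiv.Perm (Fin n)} (h : MinData π = MinData π₀)
    (i : Fin (Pset π₀).card) :
    aF π₀ i ≤ ((Tmap π₀ π (fiber_bij h) i : Fin (Pset π₀).card) : ℕ) := by
  rw [aF_iff]
  obtain ⟨h1, h2⟩ := (fiber_iff π₀ π).mp h
  set x := Tmap π₀ π (fiber_bij h) i with hxdef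
  have hpP : (pE π₀ x : Fin n) ∈ Pset π₀ := (pE π₀ x).2
  rw [mem_Pset] at hpP
  have hnm : ¬ IsLRMin π (pE π₀ x : Fin n) := fun hc => hpP ((h1 _).mp hc)
  obtain ⟨j, hj, hjm, hjlt⟩ := exists_min_before hnm
  refine ⟨j, hj, (h1 j).mp hjm, ?_⟩
  have hv : π j = π₀ j := h2 j ((h1 j).mp hjm)
  rw [← hv]
  have hval : π ((pE π₀ x : Fin n)) = (uE π₀ i : Fin n) := Tmap_spec π₀ π _ i
  rw [← hval]
  exact hjlt

open scoped Classical in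
noncomputable def Build (π₀ : Equiv.Perm (Fin n)) (σ : Equiv.Perm (Fin (Pset π₀).card)) :
    Equiv.Perm (Fin n) :=
  π₀.trans (Equiv.Perm.extendDomain
    ((Tmap π₀ π₀ (fiber_bij rfl)).trans σ.symm) (uE π₀).toEquiv)

lemma build_min (π₀ : Equiv.Perm (Fin n)) (σ : Equiv.Perm (Fin (Pset π₀).card))
    {j : Fin n} (hj : IsLRMin π₀ j) : Build π₀ σ j = π₀ j := by
  classical
  show Equiv.Perm.extendDomain _ (uE π₀).toEquiv (π₀ j) = π₀ j
  apply Equiv.Perm.extendDomain_apply_not_subtype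
  intro hmem
  rw [mem_Uset] at hmem
  obtain ⟨p, hp, hpv⟩ := hmem
  have : p = j := π₀.injective hpv
  rw [this] at hp
  exact (mem_Pset.mp hp) hj

lemma build_pos (π₀ : Equiv.Perm (Fin n)) (σ : Equiv.Perm (Fin (Pset π₀).card))
    (x : Fin (Pset π₀).card) :
    Build π₀ σ ((pE π₀ x : Fin n)) = (uE π₀ (σ.symm x) : Fin n) := by
  classical
  show Equiv.Perm.extendDomain _ (uE π₀).toEquiv (π₀ ((pE π₀ x : Fin n))) = _
  have h0 : π₀ ((pE π₀ x : Fin n))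
      = ((uE π₀).toEquiv ((Tmap π₀ π₀ (fiber_bij rfl)).symm x) : Fin n) :=
    Tmap_spec2 π₀ π₀ (fiber_bij rfl) x
  rw [h0, Equiv.Perm.extendDomain_apply_image]
  simp

lemma build_key (π₀ : Equiv.Perm (Fin n)) (σ : Equiv.Perm (Fin (Pset π₀).card))
    (hσ : CondW (aF π₀) σ) {q : Fin n} (hq : q ∈ Pset π₀) :
    ∃ j, j < q ∧ IsLRMin π₀ j ∧ π₀ j < Build π₀ σ q := by
  set x := (pE π₀).symm ⟨q, hq⟩ with hxdef
  have hq' : (pE π₀ x : Fin n) = q := by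
    rw [hxdef, OrderIso.apply_symm_apply]
  have hw := hσ (σ.symm x)
  rw [aF_iff] at hw
  rw [Equiv.apply_symm_apply] at hw
  obtain ⟨j, hj, hjm, hjv⟩ := hw
  rw [hq'] at hj
  refine ⟨j, hj, hjm, ?_⟩
  have hbp := build_pos π₀ σ x
  rw [hq'] at hbp
  rw [hbp]
  exact hjv

lemma build_fiber (π₀ : Equiv.Perm (Fin n)) (σ : Equiv.Perm (Fin (Pset π₀).card))
    (hσ : CondW (aF π₀) σ) : MinData (Build π₀ σ) = MinData π₀ := by
  rw [fiber_iff]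
  constructor
  · intro j
    constructor
    · intro hmin
      by_contra hq
      obtain ⟨j', hj', hj'm, hj'v⟩ := build_key π₀ σ hσ (mem_Pset.mpr hq)
      have : Build π₀ σ j' = π₀ j' := build_min π₀ σ hj'm
      have hcontra := hmin j' hj'
      rw [this] at hcontra
      exact lt_asymm hj'v hcontra
    · intro hmin
      intro i hi
      rw [build_min π₀ σ hmin]
      by_cases hmi : IsLRMin π₀ i
      · rw [build_min π₀ σ hmi]
        exact hmin i hi
      · obtain ⟨j', hj', hj'm, hj'v⟩ := build_key π₀ σ hσ (mem_Pset.mpr hmi)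
        have hlt : π₀ j < π₀ j' := hmin j' (hj'.trans hi)
        exact hlt.trans hj'v
  · intro j hj
    exact build_min π₀ σ hj

noncomputable def EquivT (π₀ : Equiv.Perm (Fin n)) :
    {π : Equiv.Perm (Fin n) // MinData π = MinData π₀} ≃
      {σ : Equiv.Perm (Fin (Pset π₀).card) // CondW (aF π₀) σ} where
  toFun π := ⟨Tmap π₀ π.1 (fiber_bij π.2), fun i => Tmap_window π.2 i⟩
  invFun σ := ⟨Build π₀ σ.1, build_fiber π₀ σ.1 σ.2⟩
  left_inv := by
    rintro ⟨π, hπ⟩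
    apply Subtype.ext
    apply Equiv.ext
    intro q
    show Build π₀ (Tmap π₀ π (fiber_bij hπ)) q = π q
    by_cases hq : IsLRMin π₀ q
    · rw [build_min π₀ _ hq, ((fiber_iff π₀ π).mp hπ).2 q hq]
    · have hqP : q ∈ Pset π₀ := mem_Pset.mpr hq
      have hq' : (pE π₀ ((pE π₀).symm ⟨q, hqP⟩) : Fin n) = q := by
        rw [OrderIso.apply_symm_apply]
      conv_lhs => rw [← hq']
      conv_rhs => rw [← hq']
      rw [build_pos, Tmap_spec2 π₀ π (fiber_bij hπ)]
  right_inv := by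
    rintro ⟨σ, hσ⟩
    apply Subtype.ext
    apply Equiv.ext
    intro i
    show Tmap π₀ (Build π₀ σ) (fiber_bij (build_fiber π₀ σ hσ)) i = σ i
    have h1 := Tmap_spec π₀ (Build π₀ σ) (fiber_bij (build_fiber π₀ σ hσ)) i
    have h2 := build_pos π₀ σ (σ i)
    rw [Equiv.symm_apply_apply] at h2
    have h3 : (pE π₀ (Tmap π₀ (Build π₀ σ) (fiber_bij (build_fiber π₀ σ hσ)) i) : Fin n)
        = (pE π₀ (σ i) : Fin n) := (Build π₀ σ).injective (h1.trans h2.symm)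
    exact (pE π₀).injective (Subtype.ext h3)

lemma Tmap_col (π₀ π : Equiv.Perm (Fin n)) (hb : ∀ x, x ∈ Pset π₀ ↔ π x ∈ Uset π₀)
    {q : Fin n} (hqP : q ∈ Pset π₀) :
    (pE π₀ (Tmap π₀ π hb ((uE π₀).symm ⟨π q, (hb q).mp hqP⟩)) : Fin n) = q := by
  apply π.injective
  rw [Tmap_spec, OrderIso.apply_symm_apply]

lemma min_before {π₀ π : Equiv.Perm (Fin n)} (hπ : MinData π = MinData π₀)
    {i q v : Fin n} (hiq : i < q) (hv : π i < v) :
    ∃ j, j < q ∧ IsLRMin π₀ j ∧ π₀ j < v := by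
  obtain ⟨h1, h2⟩ := (fiber_iff π₀ π).mp hπ
  by_cases hmi : IsLRMin π i
  · refine ⟨i, hiq, (h1 i).mp hmi, ?_⟩
    rw [← h2 i ((h1 i).mp hmi)]
    exact hv
  · obtain ⟨j, hj, hjm, hjv⟩ := exists_min_before hmi
    refine ⟨j, hj.trans hiq, (h1 j).mp hjm, ?_⟩
    rw [← h2 j ((h1 j).mp hjm)]
    exact hjv.trans hv

lemma pE_lt_iff (π₀ : Equiv.Perm (Fin n)) {x y : Fin (Pset π₀).card} :
    (pE π₀ x : Fin n) < (pE π₀ y : Fin n) ↔ x < y := by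
  rw [Subtype.coe_lt_coe]
  exact OrderIso.lt_iff_lt _

lemma uE_lt_iff (π₀ : Equiv.Perm (Fin n)) {x y : Fin (Pset π₀).card} :
    (uE π₀ x : Fin n) < (uE π₀ y : Fin n) ↔ x < y := by
  rw [Subtype.coe_lt_coe]
  exact OrderIso.lt_iff_lt _

lemma charA {π₀ π : Equiv.Perm (Fin n)} (hπ : MinData π = MinData π₀) :
    (¬ ContainsPat π ![1, 3, 4, 2] ∧ ¬ ContainsPat π ![1, 4, 3, 2]) ↔
      CondA (aF π₀) (Tmap π₀ π (fiber_bij hπ)) := by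
  obtain ⟨h1, h2⟩ := (fiber_iff π₀ π).mp hπ
  set σ := Tmap π₀ π (fiber_bij hπ) with hσdef
  rw [← not_or, containsA_iff]
  constructor
  · intro hno i j k hij hik hjk hw1 hl1 hw2 hl2
    apply hno
    rcases lt_trichotomy (σ j) (σ k) with hc | hc | hc
    · rw [aF_iff] at hw1
      obtain ⟨i', hi', hm, hval⟩ := hw1
      refine ⟨i', (pE π₀ (σ j) : Fin n), (pE π₀ (σ k) : Fin n), (pE π₀ (σ i) : Fin n),
        hi', (pE_lt_iff π₀).mpr hc, (pE_lt_iff π₀).mpr hl2, ?_, ?_, ?_⟩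
      · rw [Tmap_spec, h2 i' hm]
        exact hval
      · rw [Tmap_spec, Tmap_spec]
        exact (uE_lt_iff π₀).mpr hij
      · rw [Tmap_spec, Tmap_spec]
        exact (uE_lt_iff π₀).mpr hik
    · exact absurd (σ.injective hc) hjk
    · rw [aF_iff] at hw2
      obtain ⟨i', hi', hm, hval⟩ := hw2
      refine ⟨i', (pE π₀ (σ k) : Fin n), (pE π₀ (σ j) : Fin n), (pE π₀ (σ i) : Fin n),
        hi', (pE_lt_iff π₀).mpr hc, (pE_lt_iff π₀).mpr hl1, ?_, ?_, ?_⟩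
      · rw [Tmap_spec, h2 i' hm]
        exact hval
      · rw [Tmap_spec, Tmap_spec]
        exact (uE_lt_iff π₀).mpr hik
      · rw [Tmap_spec, Tmap_spec]
        exact (uE_lt_iff π₀).mpr hij
  · rintro hC ⟨i, j, k, l, hij, hjk, hkl, f1, f2, f3⟩
    have hnl : ¬ IsLRMin π l := fun hm => lt_asymm f1 (hm i ((hij.trans hjk).trans hkl))
    have hnj : ¬ IsLRMin π j := fun hm => lt_asymm (f1.trans f2) (hm i hij)
    have hnk : ¬ IsLRMin π k := fun hm => lt_asymm (f1.trans f3) (hm i (hij.trans hjk))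
    have lP : l ∈ Pset π₀ := mem_Pset.mpr (fun hm => hnl ((h1 l).mpr hm))
    have jP : j ∈ Pset π₀ := mem_Pset.mpr (fun hm => hnj ((h1 j).mpr hm))
    have kP : k ∈ Pset π₀ := mem_Pset.mpr (fun hm => hnk ((h1 k).mpr hm))
    set li := (uE π₀).symm ⟨π l, (fiber_bij hπ l).mp lP⟩ with hlidef
    set ji := (uE π₀).symm ⟨π j, (fiber_bij hπ j).mp jP⟩ with hjidef
    set ki := (uE π₀).symm ⟨π k, (fiber_bij hπ k).mp kP⟩ with hkidef
    have hvl : (uE π₀ li : Fin n) = π l := by rw [hlidef, OrderIso.apply_symm_apply]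
    have hvj : (uE π₀ ji : Fin n) = π j := by rw [hjidef, OrderIso.apply_symm_apply]
    have hvk : (uE π₀ ki : Fin n) = π k := by rw [hkidef, OrderIso.apply_symm_apply]
    have hcl : (pE π₀ (σ li) : Fin n) = l := Tmap_col π₀ π _ lP
    have hcj : (pE π₀ (σ ji) : Fin n) = j := Tmap_col π₀ π _ jP
    have hck : (pE π₀ (σ ki) : Fin n) = k := Tmap_col π₀ π _ kP
    refine hC li ji ki ?_ ?_ ?_ ?_ ?_ ?_ ?_
    · rw [← uE_lt_iff π₀, hvl, hvj]; exact f2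
    · rw [← uE_lt_iff π₀, hvl, hvk]; exact f3
    · intro h
      have : π j = π k := by rw [← hvj, ← hvk, h]
      exact (ne_of_lt hjk) (π.injective this)
    · rw [aF_iff]
      have : Allowed π₀ (π l) j := by
        obtain ⟨j', hj', hjm, hjv⟩ := min_before hπ hij f1
        exact ⟨j', hj', hjm, hjv⟩
      rw [hcj, hvl]
      exact this
    · rw [← pE_lt_iff π₀, hcj, hcl]; exact hjk.trans hkl
    · rw [aF_iff]
      rw [hck, hvl]
      obtain ⟨j', hj', hjm, hjv⟩ := min_before hπ (hij.trans hjk) f1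
      exact ⟨j', hj', hjm, hjv⟩
    · rw [← pE_lt_iff π₀, hck, hcl]; exact hkl

lemma charB {π₀ π : Equiv.Perm (Fin n)} (hπ : MinData π = MinData π₀) :
    (¬ ContainsPat π ![1, 2, 3, 4] ∧ ¬ ContainsPat π ![1, 2, 4, 3]) ↔
      CondB (Tmap π₀ π (fiber_bij hπ)) := by
  obtain ⟨h1, h2⟩ := (fiber_iff π₀ π).mp hπ
  set σ := Tmap π₀ π (fiber_bij hπ) with hσdef
  rw [← not_or, containsB_iff]
  constructor
  · intro hno i j k hij hik hjk hl1 hl2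
    apply hno
    have hpP : (pE π₀ (σ i) : Fin n) ∈ Pset π₀ := (pE π₀ (σ i)).2
    have hnm : ¬ IsLRMin π (pE π₀ (σ i) : Fin n) :=
      fun hc => (mem_Pset.mp hpP) ((h1 _).mp hc)
    obtain ⟨i', hi', him, hiv⟩ := exists_min_before hnm
    rcases lt_trichotomy (σ j) (σ k) with hc | hc | hc
    · refine ⟨i', (pE π₀ (σ i) : Fin n), (pE π₀ (σ j) : Fin n), (pE π₀ (σ k) : Fin n),
        hi', (pE_lt_iff π₀).mpr hl1, (pE_lt_iff π₀).mpr hc, hiv, ?_, ?_⟩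
      · rw [Tmap_spec, Tmap_spec]; exact (uE_lt_iff π₀).mpr hij
      · rw [Tmap_spec, Tmap_spec]; exact (uE_lt_iff π₀).mpr hik
    · exact absurd (σ.injective hc) hjk
    · refine ⟨i', (pE π₀ (σ i) : Fin n), (pE π₀ (σ k) : Fin n), (pE π₀ (σ j) : Fin n),
        hi', (pE_lt_iff π₀).mpr hl2, (pE_lt_iff π₀).mpr hc, hiv, ?_, ?_⟩
      · rw [Tmap_spec, Tmap_spec]; exact (uE_lt_iff π₀).mpr hik
      · rw [Tmap_spec, Tmap_spec]; exact (uE_lt_iff π₀).mpr hij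
  · rintro hC ⟨i, j, k, l, hij, hjk, hkl, f1, f2, f3⟩
    have hnj : ¬ IsLRMin π j := fun hm => lt_asymm f1 (hm i hij)
    have hnk : ¬ IsLRMin π k := fun hm => lt_asymm (f1.trans f2) (hm i (hij.trans hjk))
    have hnl : ¬ IsLRMin π l := fun hm => lt_asymm (f1.trans f3) (hm i ((hij.trans hjk).trans hkl))
    have jP : j ∈ Pset π₀ := mem_Pset.mpr (fun hm => hnj ((h1 j).mpr hm))
    have kP : k ∈ Pset π₀ := mem_Pset.mpr (fun hm => hnk ((h1 k).mpr hm))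
    have lP : l ∈ Pset π₀ := mem_Pset.mpr (fun hm => hnl ((h1 l).mpr hm))
    set ji := (uE π₀).symm ⟨π j, (fiber_bij hπ j).mp jP⟩ with hjidef
    set ki := (uE π₀).symm ⟨π k, (fiber_bij hπ k).mp kP⟩ with hkidef
    set li := (uE π₀).symm ⟨π l, (fiber_bij hπ l).mp lP⟩ with hlidef
    have hvj : (uE π₀ ji : Fin n) = π j := by rw [hjidef, OrderIso.apply_symm_apply]
    have hvk : (uE π₀ ki : Fin n) = π k := by rw [hkidef, OrderIso.apply_symm_apply]
    have hvl : (uE π₀ li : Fin n) = π l := by rw [hlidef, OrderIso.apply_symm_apply]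
    have hcj : (pE π₀ (σ ji) : Fin n) = j := Tmap_col π₀ π _ jP
    have hck : (pE π₀ (σ ki) : Fin n) = k := Tmap_col π₀ π _ kP
    have hcl : (pE π₀ (σ li) : Fin n) = l := Tmap_col π₀ π _ lP
    refine hC ji ki li ?_ ?_ ?_ ?_ ?_
    · rw [← uE_lt_iff π₀, hvj, hvk]; exact f2
    · rw [← uE_lt_iff π₀, hvj, hvl]; exact f3
    · intro h
      have : π k = π l := by rw [← hvk, ← hvl, h]
      exact (ne_of_lt hkl) (π.injective this)
    · rw [← pE_lt_iff π₀, hcj, hck]; exact hjk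
    · rw [← pE_lt_iff π₀, hcj, hcl]; exact hjk.trans hkl

lemma fiber_card_eq (n : ℕ) (d : Fin n → Option (Fin n)) :
    Nat.card {π : Equiv.Perm (Fin n) //
      (¬ ContainsPat π ![1, 3, 4, 2] ∧ ¬ ContainsPat π ![1, 4, 3, 2]) ∧ MinData π = d}
    = Nat.card {π : Equiv.Perm (Fin n) //
      (¬ ContainsPat π ![1, 2, 3, 4] ∧ ¬ ContainsPat π ![1, 2, 4, 3]) ∧ MinData π = d} := by
  by_cases hd : ∃ π₀ : Equiv.Perm (Fin n), MinData π₀ = d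
  · obtain ⟨π₀, rfl⟩ := hd
    have eA : {π : Equiv.Perm (Fin n) //
        (¬ ContainsPat π ![1, 3, 4, 2] ∧ ¬ ContainsPat π ![1, 4, 3, 2]) ∧
          MinData π = MinData π₀} ≃
        {σ : Equiv.Perm (Fin (Pset π₀).card) // CondW (aF π₀) σ ∧ CondA (aF π₀) σ} := by
      refine ((Equiv.subtypeEquivRight (fun π => and_comm)).trans
        ((Equiv.subtypeSubtypeEquivSubtypeInter
          (fun π : Equiv.Perm (Fin n) => MinData π = MinData π₀)
          (fun π => ¬ ContainsPat π ![1, 3, 4, 2] ∧ ¬ ContainsPat π ![1, 4, 3, 2])).symm.trans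
        ((Equiv.subtypeEquiv (EquivT π₀) (fun x => ?_)).trans
          (Equiv.subtypeSubtypeEquivSubtypeInter _ _))))
      exact charA x.2
    have eB : {π : Equiv.Perm (Fin n) //
        (¬ ContainsPat π ![1, 2, 3, 4] ∧ ¬ ContainsPat π ![1, 2, 4, 3]) ∧
          MinData π = MinData π₀} ≃
        {σ : Equiv.Perm (Fin (Pset π₀).card) // CondW (aF π₀) σ ∧ CondB σ} := by
      refine ((Equiv.subtypeEquivRight (fun π => and_comm)).trans
        ((Equiv.subtypeSubtypeEquivSubtypeInter
          (fun π : Equiv.Perm (Fin n) => MinData π = MinData π₀)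
          (fun π => ¬ ContainsPat π ![1, 2, 3, 4] ∧ ¬ ContainsPat π ![1, 2, 4, 3])).symm.trans
        ((Equiv.subtypeEquiv (EquivT π₀) (fun x => ?_)).trans
          (Equiv.subtypeSubtypeEquivSubtypeInter _ _))))
      exact charB x.2
    rw [Nat.card_congr eA, Nat.card_congr eB]
    exact key_card _ (aF π₀) (aF_antitone π₀)
  · have h1 : IsEmpty {π : Equiv.Perm (Fin n) //
        (¬ ContainsPat π ![1, 3, 4, 2] ∧ ¬ ContainsPat π ![1, 4, 3, 2]) ∧ MinData π = d} :=
      ⟨fun x => hd ⟨x.1, x.2.2⟩⟩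
    have h2 : IsEmpty {π : Equiv.Perm (Fin n) //
        (¬ ContainsPat π ![1, 2, 3, 4] ∧ ¬ ContainsPat π ![1, 2, 4, 3]) ∧ MinData π = d} :=
      ⟨fun x => hd ⟨x.1, x.2.2⟩⟩
    rw [Nat.card_of_isEmpty, Nat.card_of_isEmpty]

end Reduction

end Stmt8

theorem stmt_8 (n : ℕ) :
    ∃ F : {π : Equiv.Perm (Fin n) //
            ¬ ContainsPat π ![1, 3, 4, 2] ∧ ¬ ContainsPat π ![1, 4, 3, 2]} ≃
          {π : Equiv.Perm (Fin n) //
            ¬ ContainsPat π ![1, 2, 3, 4] ∧ ¬ ContainsPat π ![1, 2, 4, 3]},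
      ∀ π j, (IsLRMin π.1 j ↔ IsLRMin (F π).1 j) ∧
             (IsLRMin π.1 j → π.1 j = (F π).1 j) := by
  obtain ⟨e, he⟩ := assemble (X := {π : Equiv.Perm (Fin n) //
            ¬ ContainsPat π ![1, 3, 4, 2] ∧ ¬ ContainsPat π ![1, 4, 3, 2]})
    (Y := {π : Equiv.Perm (Fin n) //
            ¬ ContainsPat π ![1, 2, 3, 4] ∧ ¬ ContainsPat π ![1, 2, 4, 3]})
    (fun x => MinData x.1) (fun y => MinData y.1) (fun d => by
      have e1 := Equiv.subtypeSubtypeEquivSubtypeInter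
        (fun π : Equiv.Perm (Fin n) =>
          ¬ ContainsPat π ![1, 3, 4, 2] ∧ ¬ ContainsPat π ![1, 4, 3, 2])
        (fun π => MinData π = d)
      have e2 := Equiv.subtypeSubtypeEquivSubtypeInter
        (fun π : Equiv.Perm (Fin n) =>
          ¬ ContainsPat π ![1, 2, 3, 4] ∧ ¬ ContainsPat π ![1, 2, 4, 3])
        (fun π => MinData π = d)
      rw [Nat.card_congr e1, Nat.card_congr e2]
      exact Stmt8.fiber_card_eq n d)
  exact ⟨e, fun π j => minData_spec (he π).symm j⟩
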